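/- For an item i = [X → ω₁ ·⁽²⁾ within a permutation phrase with seen-set π₁ and remaining-set π₂], repeated application of the step function on the symbols of any ordering of π₂ reaches the item [X → ω₁ π ·⁽¹⁾ ω₂] where π = π₁ ∪ π₂: i.e., processing the remaining symbols of a permutation phrase in any order completes the phrase. -/

import Mathlib

/-- An LR(0) item: dot position in the segment list and, when inside a
permutation-phrase segment (dot level 2), the set of already-seen symbols. -/
structure PItem (α : Type*) where
  pos : ℕ
  seen : Option (Finset α)

/-- The `step` function: moves the dot on symbol `Y` (partial, `none` = undefined). -/
def stepItem {α : Type*} [DecidableEq α] (ω : List (α ⊕ Finset α))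
    (i : PItem α) (Y : α) : Option (PItem α) :=
  match i.seen with
  | none =>
    match ω[i.pos]? with
    | some (Sum.inl a) => if a = Y then some ⟨i.pos + 1, none⟩ else none
    | some (Sum.inr S) =>
        if Y ∈ S then
          if S = {Y} then some ⟨i.pos + 1, none⟩ else some ⟨i.pos, some {Y}⟩
        else none
    | none => none
  | some s =>
    match ω[i.pos]? with
    | some (Sum.inr S) =>
        if Y ∈ S ∧ Y ∉ s then
          if S = insert Y s then some ⟨i.pos + 1, none⟩
          else some ⟨i.pos, some (insert Y s)⟩
        else none
    | _ => none

/-- Processing the remaining symbols `π₂` of a permutation phrase `π = π₁ ∪ π₂`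
in any order (any duplicate-free enumeration `l` of `π₂`) completes the phrase:
folding `step` over `l` from the level-2 item with seen-set `π₁` yields the
level-1 item with the dot just after the permutation-phrase segment. -/
theorem stmt_12 {α : Type*} [DecidableEq α] (ω : List (α ⊕ Finset α)) (p : ℕ)
    (π π₁ π₂ : Finset α) (hseg : ω[p]? = some (Sum.inr π))
    (hunion : π₁ ∪ π₂ = π) (hdisj : Disjoint π₁ π₂)
    (h1 : π₁.Nonempty) (h2 : π₂.Nonempty)
    (l : List α) (hl : l.Nodup) (hlπ : l.toFinset = π₂) :
    l.foldl (fun oi Y => oi.bind fun i => stepItem ω i Y)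
        (some (⟨p, some π₁⟩ : PItem α))
      = some (⟨p + 1, none⟩ : PItem α) := by
  induction l generalizing π₁ π₂ with
  | nil =>
    exfalso
    simp at hlπ
    exact h2.ne_empty hlπ.symm
  | cons Y rest ih =>
    have hYπ₂ : Y ∈ π₂ := by rw [← hlπ]; simp
    have hYπ : Y ∈ π := by rw [← hunion]; simp [hYπ₂]
    have hYπ₁ : Y ∉ π₁ := fun h => (hdisj.forall_ne_finset h hYπ₂) rfl
    have hnodup := hl
    simp only [List.nodup_cons] at hnodup
    have hstep : stepItem ω (⟨p, some π₁⟩ : PItem α) Y =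
        if π = insert Y π₁ then some (⟨p + 1, none⟩ : PItem α)
        else some (⟨p, some (insert Y π₁)⟩ : PItem α) := by
      show (match ω[p]? with
        | some (Sum.inr S) =>
          if Y ∈ S ∧ Y ∉ π₁ then
            if S = insert Y π₁ then some (⟨p + 1, none⟩ : PItem α)
            else some (⟨p, some (insert Y π₁)⟩ : PItem α)
          else none
        | _ => none) = _
      rw [hseg]
      simp [hYπ, hYπ₁]
    simp only [List.foldl_cons, Option.bind_some, hstep]
    by_cases hcase : π = insert Y π₁
    · rw [if_pos hcase]
      have hπ₂ : π₂ = {Y} := by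
        apply Finset.eq_singleton_iff_unique_mem.mpr
        refine ⟨hYπ₂, fun x hx => ?_⟩
        have hxπ : x ∈ π := by rw [← hunion]; simp [hx]
        rw [hcase, Finset.mem_insert] at hxπ
        rcases hxπ with h | h
        · exact h
        · exact absurd rfl ((hdisj.forall_ne_finset h hx))
      have : rest = [] := by
        rcases rest with _ | ⟨z, rest'⟩
        · rfl
        · exfalso
          have hz : z ∈ π₂ := by rw [← hlπ]; simp
          rw [hπ₂, Finset.mem_singleton] at hz
          exact hnodup.1 (by simp [hz])
      simp [this]
    · rw [if_neg hcase]
      have hne : rest ≠ [] := by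
        intro h
        subst h
        simp at hlπ
        apply hcase
        rw [← hunion, ← hlπ]
        rw [Finset.union_comm]
        simp [Finset.insert_eq, -Finset.singleton_union]
      apply ih (insert Y π₁) (π₂.erase Y)
      · rw [← hunion]
        ext x
        by_cases hx : x = Y
        · simp [hx, hYπ₂]
        · simp [hx, Finset.mem_erase]
      · rw [Finset.disjoint_left]
        intro x hx hx'
        rw [Finset.mem_erase] at hx'
        rcases Finset.mem_insert.mp hx with rfl | hx
        · exact hx'.1 rfl
        · exact (Finset.disjoint_left.mp hdisj hx) hx'.2
      · exact ⟨Y, Finset.mem_insert_self _ _⟩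
      · rcases rest with _ | ⟨z, rest'⟩
        · exact absurd rfl hne
        · refine ⟨z, Finset.mem_erase.mpr ⟨?_, ?_⟩⟩
          · intro h
            apply hnodup.1
            rw [← h]
            simp
          · rw [← hlπ]; simp
      · exact hnodup.2
      · rw [← hlπ]
        simp only [List.toFinset_cons]
        rw [Finset.erase_insert (by simp [hnodup.1])]
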